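/- Let X be a Polish space, R ⊆ C_b(X) a subring that approximates open sets, V a normed R-module and N a local vector measure on V. Then for every open A ⊆ X and every v ∈ V one has |N(A)(v)| ≤ |N|(A) · ‖v‖_{|A}, with the convention that the right-hand side equals 0 when |N|(A) = ∞ and ‖v‖_{|A} = 0. -/

import Mathlib

open BoundedContinuousFunction Filter Topology Set MeasureTheory ENNReal

noncomputable section

/-- A subring `R ⊆ C_b(X)` approximates open sets. -/
structure ApproximatesOpenSets {X : Type*} [TopologicalSpace X] (R : Subring (X →ᵇ ℝ)) : Prop where
  const_mem : ∀ c : ℝ, const X c ∈ R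
  sup_mem : ∀ f g : X →ᵇ ℝ, f ∈ R → g ∈ R → ∃ h ∈ R, ∀ x, h x = max (f x) (g x)
  inf_mem : ∀ f g : X →ᵇ ℝ, f ∈ R → g ∈ R → ∃ h ∈ R, ∀ x, h x = min (f x) (g x)
  const_mul_mem : ∀ (c : ℝ) (f : X →ᵇ ℝ), f ∈ R → const X c * f ∈ R
  approx : ∀ A : Set X, IsOpen A →
    ∃ f : ℕ → X →ᵇ ℝ, (∀ k, f k ∈ R) ∧ (∀ x, Monotone fun k => f k x) ∧
      ∀ x, Tendsto (fun k => f k x) atTop (𝓝 (A.indicator (fun _ => (1:ℝ)) x))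

/-- The action of constant functions in `R` agrees with the real scalar multiplication. -/
def ConstSMulCompat {X : Type*} [TopologicalSpace X] (R : Subring (X →ᵇ ℝ)) (V : Type*)
    [NormedAddCommGroup V] [NormedSpace ℝ V] [Module R V] : Prop :=
  ∀ (c : ℝ) (hc : const X c ∈ R) (v : V), (⟨const X c, hc⟩ : ↥R) • v = c • v

/-- The compatibility inequality defining a normed `R`-module. -/
def NormSMulCompat {X : Type*} [TopologicalSpace X] (R : Subring (X →ᵇ ℝ)) (V : Type*)
    [NormedAddCommGroup V] [Module R V] : Prop :=
  ∀ (s : Finset ℕ) (f : ℕ → ↥R) (v : ℕ → V) (M K : ℝ), 0 ≤ M → 0 ≤ K →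
    ((s : Set ℕ).Pairwise fun i j =>
      Disjoint (tsupport ⇑((f i : X →ᵇ ℝ))) (tsupport ⇑((f j : X →ᵇ ℝ)))) →
    (∀ i ∈ s, ‖(f i : X →ᵇ ℝ)‖ ≤ M) → (∀ i ∈ s, ‖v i‖ ≤ K) →
    ‖∑ i ∈ s, f i • v i‖ ≤ M * K

/-- The local seminorm `‖v‖_{|A}`. -/
def locNorm {X : Type*} [TopologicalSpace X] (R : Subring (X →ᵇ ℝ)) {V : Type*}
    [NormedAddCommGroup V] [Module R V] (A : Set X) (v : V) : ℝ :=
  sSup {r : ℝ | ∃ f : ↥R, tsupport ⇑((f : X →ᵇ ℝ)) ⊆ A ∧ ‖(f : X →ᵇ ℝ)‖ ≤ 1 ∧ r = ‖f • v‖}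

/-- The germ seminorm `|v|_g(x)`. -/
def germNorm {X : Type*} [TopologicalSpace X] (R : Subring (X →ᵇ ℝ)) {V : Type*}
    [NormedAddCommGroup V] [Module R V] (v : V) (x : X) : ℝ :=
  sInf {r : ℝ | ∃ A : Set X, IsOpen A ∧ x ∈ A ∧ r = locNorm R A v}

/-- `supp v ⊆ B`: there is a closed set `C ⊆ B` with `‖v‖_{|X∖C} = 0`. -/
def suppIn {X : Type*} [TopologicalSpace X] (R : Subring (X →ᵇ ℝ)) {V : Type*}
    [NormedAddCommGroup V] [Module R V] (v : V) (B : Set X) : Prop :=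
  ∃ C : Set X, IsClosed C ∧ C ⊆ B ∧ locNorm R Cᶜ v = 0

/-- σ-additivity, with convergence of the partial sums in norm. -/
def SigmaAdditive {X : Type*} [MeasurableSpace X] {E : Type*} [NormedAddCommGroup E]
    (N : Set X → E) : Prop :=
  ∀ A : ℕ → Set X, (∀ n, MeasurableSet (A n)) → Pairwise (Function.onFun Disjoint A) →
    Tendsto (fun n => ∑ k ∈ Finset.range n, N (A k)) atTop (𝓝 (N (⋃ k, A k)))

/-- A local vector measure on the normed `R`-module `V`. -/
structure IsLocalVectorMeasure {X : Type*} [TopologicalSpace X] [MeasurableSpace X]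
    (R : Subring (X →ᵇ ℝ)) {V : Type*} [NormedAddCommGroup V] [NormedSpace ℝ V] [Module R V]
    (N : Set X → V →L[ℝ] ℝ) : Prop where
  sigma_additive : SigmaAdditive N
  weakly_local : ∀ A : Set X, IsOpen A → ∀ v : V, locNorm R A v = 0 → N A v = 0

/-- The total variation `|N|(B)`, as the supremum of `Σ ‖N(A_i)‖` over finite Borel
partitions of `B`. -/
def totalVar {X : Type*} [MeasurableSpace X] {E : Type*} [NormedAddCommGroup E]
    (N : Set X → E) (B : Set X) : ℝ≥0∞ :=
  ⨆ (n : ℕ) (A : Fin n → Set X)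
    (_ : (∀ i, MeasurableSet (A i)) ∧ Pairwise (Function.onFun Disjoint A) ∧ (⋃ i, A i) = B),
      ∑ i, (‖N (A i)‖₊ : ℝ≥0∞)

/-- Tightness of a functional `F ∈ V'` with respect to `R`. -/
def IsTight {X : Type*} [TopologicalSpace X] (R : Subring (X →ᵇ ℝ)) {V : Type*}
    [NormedAddCommGroup V] [NormedSpace ℝ V] [Module R V] (F : V →L[ℝ] ℝ) : Prop :=
  ∀ (v : V) (f : ℕ → ↥R),
    (∀ x, Antitone fun n => ((f n : X →ᵇ ℝ)) x) →
    (∀ x, Tendsto (fun n => ((f n : X →ᵇ ℝ)) x) atTop (𝓝 (0:ℝ))) →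
    Tendsto (fun n => F ((f n) • v)) atTop (𝓝 (0:ℝ))


section Statement4Aux

variable {X : Type*} [TopologicalSpace X] {V : Type*} [NormedAddCommGroup V]
  {R : Subring (X →ᵇ ℝ)} [Module R V]

lemma locNorm_zero_mem' (A : Set X) (v : V) :
    (0:ℝ) ∈ {r : ℝ | ∃ f : ↥R, tsupport ⇑((f : X →ᵇ ℝ)) ⊆ A ∧ ‖(f : X →ᵇ ℝ)‖ ≤ 1 ∧ r = ‖f • v‖} :=
  ⟨0, by simp [tsupport], by simp, by simp⟩

lemma norm_smul_le_norm' (hnorm : NormSMulCompat R V) (f : ↥R) (hf1 : ‖(f : X →ᵇ ℝ)‖ ≤ 1)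
    (v : V) : ‖f • v‖ ≤ ‖v‖ := by
  have h := hnorm {0} (fun _ => f) (fun _ => v) 1 ‖v‖ zero_le_one (norm_nonneg v)
    (by simp) (fun i _ => hf1) (fun i _ => le_rfl)
  simpa using h

lemma locNorm_bddAbove' (hnorm : NormSMulCompat R V) (A : Set X) (v : V) :
    BddAbove {r : ℝ | ∃ f : ↥R, tsupport ⇑((f : X →ᵇ ℝ)) ⊆ A ∧ ‖(f : X →ᵇ ℝ)‖ ≤ 1 ∧ r = ‖f • v‖} :=
  ⟨‖v‖, fun r hr => by obtain ⟨f, -, hf1, rfl⟩ := hr; exact norm_smul_le_norm' hnorm f hf1 v⟩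

lemma locNorm_nonneg' (hnorm : NormSMulCompat R V) (A : Set X) (v : V) : 0 ≤ locNorm R A v :=
  le_csSup (locNorm_bddAbove' hnorm A v) (locNorm_zero_mem' A v)

lemma norm_smul_le_locNorm' (hnorm : NormSMulCompat R V) {A : Set X} (f : ↥R)
    (hsupp : tsupport ⇑((f : X →ᵇ ℝ)) ⊆ A) (hf1 : ‖(f : X →ᵇ ℝ)‖ ≤ 1) (v : V) :
    ‖f • v‖ ≤ locNorm R A v :=
  le_csSup (locNorm_bddAbove' hnorm A v) ⟨f, hsupp, hf1, rfl⟩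

lemma locNorm_mono' (hnorm : NormSMulCompat R V) {A B : Set X} (h : A ⊆ B) (v : V) :
    locNorm R A v ≤ locNorm R B v :=
  csSup_le_csSup (locNorm_bddAbove' hnorm B v) ⟨0, locNorm_zero_mem' A v⟩
    (fun r hr => by obtain ⟨f, h1, h2, h3⟩ := hr; exact ⟨f, h1.trans h, h2, h3⟩)

end Statement4Aux

section MeasAux

variable {X : Type*} [MeasurableSpace X] {E : Type*} [NormedAddCommGroup E] {N : Set X → E}

lemma SigmaAdditive.empty' (h : SigmaAdditive N) : N ∅ = 0 := by
  have h0 := h (fun _ => ∅) (fun _ => MeasurableSet.empty)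
    (fun i j hij => by simp [Function.onFun])
  simp only [Finset.sum_const, Finset.card_range, iUnion_empty] at h0
  have h1 : Tendsto (fun n : ℕ => (n + 1) • N ∅ - n • N ∅) atTop (𝓝 (N ∅ - N ∅)) :=
    (h0.comp (tendsto_add_atTop_nat 1)).sub h0
  have h2 : (fun n : ℕ => (n + 1) • N ∅ - n • N ∅) = fun _ => N ∅ := by
    funext n; rw [add_smul, one_smul]; abel
  rw [h2, sub_self] at h1
  exact tendsto_nhds_unique tendsto_const_nhds h1

lemma SigmaAdditive.union' (h : SigmaAdditive N) {B C : Set X} (hB : MeasurableSet B)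
    (hC : MeasurableSet C) (hd : Disjoint B C) : N (B ∪ C) = N B + N C := by
  classical
  set g : ℕ → Set X := fun n => if n = 0 then B else if n = 1 then C else ∅ with hg
  have hmeas : ∀ n, MeasurableSet (g n) := by
    intro n; simp only [g]; split
    · exact hB
    · split
      · exact hC
      · exact MeasurableSet.empty
  have hpair : Pairwise (Function.onFun Disjoint g) := by
    intro i j hij
    simp only [Function.onFun, g]
    match i, j with
    | 0, 0 => exact absurd rfl hij
    | 0, 1 => simpa using hd
    | 0, (k+2) => simp
    | 1, 0 => simpa using hd.symm
    | 1, 1 => exact absurd rfl hij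
    | 1, (k+2) => simp
    | (k+2), 0 => simp
    | (k+2), 1 => simp
    | (k+2), (l+2) => simp
  have hunion : (⋃ k, g k) = B ∪ C := by
    apply subset_antisymm
    · refine iUnion_subset fun k => ?_
      match k with
      | 0 => exact subset_union_left
      | 1 => exact subset_union_right
      | (k+2) => simp [g]
    · refine union_subset ?_ ?_
      · exact subset_iUnion_of_subset 0 (by simp [g])
      · exact subset_iUnion_of_subset 1 (by simp [g])
  have hemp : N ∅ = 0 := h.empty'
  have hsum : ∀ n, 2 ≤ n → ∑ k ∈ Finset.range n, N (g k) = N B + N C := by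
    intro n hn
    induction n with
    | zero => omega
    | succ m ih =>
      rcases Nat.lt_or_ge m 2 with hm | hm
      · interval_cases m
        · omega
        · simp [Finset.sum_range_succ, g]
      · rw [Finset.sum_range_succ, ih hm]
        have hgm : g m = ∅ := by simp only [g]; rw [if_neg (by omega), if_neg (by omega)]
        rw [hgm, hemp, add_zero]
  have htend := h g hmeas hpair
  rw [hunion] at htend
  have h2 : Tendsto (fun _ : ℕ => N B + N C) atTop (𝓝 (N (B ∪ C))) :=
    htend.congr' (eventually_atTop.2 ⟨2, hsum⟩)
  exact (tendsto_nhds_unique tendsto_const_nhds h2).symm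

end MeasAux

lemma borel_local {X : Type*} [TopologicalSpace X] [MeasurableSpace X] [BorelSpace X]
    {V : Type*} [NormedAddCommGroup V] [NormedSpace ℝ V]
    {R : Subring (X →ᵇ ℝ)} [Module R V]
    (hnorm : NormSMulCompat R V)
    {N : Set X → V →L[ℝ] ℝ} (hN : IsLocalVectorMeasure R N)
    {W : Set X} (hW : IsOpen W) (w : V) (hw : locNorm R W w = 0)
    {B : Set X} (hB : MeasurableSet B) (hBW : B ⊆ W) : N B w = 0 := by
  have key : ∀ ⦃t : Set X⦄, MeasurableSet t → N (t ∩ W) w = 0 := by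
    refine MeasurableSet.induction_on_open ?_ ?_ ?_
    · intro U hU
      refine hN.weakly_local _ (hU.inter hW) w (le_antisymm ?_ (locNorm_nonneg' hnorm _ w))
      calc locNorm R (U ∩ W) w ≤ locNorm R W w := locNorm_mono' hnorm inter_subset_right w
        _ = 0 := hw
    · intro t ht hIH
      have hWzero : N W w = 0 := hN.weakly_local _ hW w hw
      have hsplit : N W = N (t ∩ W) + N (tᶜ ∩ W) := by
        have hu : (t ∩ W) ∪ (tᶜ ∩ W) = W := by ext x; by_cases hx : x ∈ t <;> simp [hx]
        have hd : Disjoint (t ∩ W) (tᶜ ∩ W) :=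
          Disjoint.mono inter_subset_left inter_subset_left disjoint_compl_right
        calc N W = N ((t ∩ W) ∪ (tᶜ ∩ W)) := by rw [hu]
          _ = N (t ∩ W) + N (tᶜ ∩ W) := hN.sigma_additive.union'
              (ht.inter hW.measurableSet) (ht.compl.inter hW.measurableSet) hd
      have hc := congrArg (fun T => T w) hsplit
      simp only [ContinuousLinearMap.add_apply, hIH, hWzero, zero_add] at hc
      exact hc.symm
    · intro f hfd hfm hfC
      have htend := hN.sigma_additive (fun i => f i ∩ W)
        (fun i => (hfm i).inter hW.measurableSet)
        (fun i j hij => (hfd hij).mono inter_subset_left inter_subset_left)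
      rw [← iUnion_inter] at htend
      have happ : Tendsto (fun n => (∑ k ∈ Finset.range n, N (f k ∩ W)) w) atTop
          (𝓝 (N ((⋃ i, f i) ∩ W) w)) :=
        ((ContinuousLinearMap.apply ℝ ℝ w).continuous.tendsto _).comp htend
      have hz : (fun n => (∑ k ∈ Finset.range n, N (f k ∩ W)) w) = fun _ => (0:ℝ) := by
        funext n
        rw [ContinuousLinearMap.sum_apply]
        exact Finset.sum_eq_zero fun k _ => hfC k
      rw [hz] at happ
      exact (tendsto_nhds_unique tendsto_const_nhds happ).symm
  have h := key hB
  rwa [inter_eq_self_of_subset_left hBW] at h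

set_option maxHeartbeats 2000000 in
/-- for a local vector measure `N` on `V`, every open `A` and every `v`,
`|N(A)(v)| ≤ |N|(A) · ‖v‖_{|A}` (with the convention `∞ · 0 = 0`). -/
theorem statement4 {X : Type*} [MetricSpace X] [CompleteSpace X]
    [TopologicalSpace.SeparableSpace X] [MeasurableSpace X] [BorelSpace X]
    {V : Type*} [NormedAddCommGroup V] [NormedSpace ℝ V]
    (R : Subring (X →ᵇ ℝ)) [Module R V]
    (hR : ApproximatesOpenSets R) (hconst : ConstSMulCompat R V) (hnorm : NormSMulCompat R V)
    (N : Set X → V →L[ℝ] ℝ) (hN : IsLocalVectorMeasure R N)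
    (A : Set X) (hA : IsOpen A) (v : V) :
    ENNReal.ofReal |N A v| ≤ totalVar N A * ENNReal.ofReal (locNorm R A v) := by
  classical
  set L := locNorm R A v with hLdef
  have hL0 : 0 ≤ L := locNorm_nonneg' hnorm A v
  -- exhausting open sets with closure inside A
  set U : ℕ → Set X := fun m => (Metric.cthickening (1/((m:ℝ)+1)) Aᶜ)ᶜ with hUdef
  have hUopen : ∀ m, IsOpen (U m) := fun m => Metric.isClosed_cthickening.isOpen_compl
  have hUcl : ∀ m, closure (U m) ⊆ A := by
    intro m
    have h1 : closure (U m) ⊆ {x | ENNReal.ofReal (1/((m:ℝ)+1)) ≤ EMetric.infEdist x Aᶜ} := by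
      apply closure_minimal
      · intro x hx
        simp only [hUdef, mem_compl_iff, Metric.mem_cthickening_iff, not_le] at hx
        exact hx.le
      · exact isClosed_le continuous_const EMetric.continuous_infEdist
    intro x hx
    by_contra hxA
    have h0 : EMetric.infEdist x Aᶜ = 0 := EMetric.infEdist_zero_of_mem hxA
    have h2 := h1 hx
    rw [mem_setOf_eq, h0, le_zero_iff] at h2
    exact absurd h2 (ENNReal.ofReal_pos.2 (by positivity)).ne'
  have hUsubA : ∀ m, U m ⊆ A := fun m => subset_closure.trans (hUcl m)
  have hUcover : ∀ x ∈ A, ∃ m, x ∈ U m := by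
    intro x hx
    have hpos : 0 < EMetric.infEdist x Aᶜ := by
      rw [show EMetric.infEdist x Aᶜ = Metric.infEDist x Aᶜ from rfl, EMetric.infEdist_pos_iff_notMem_closure, hA.isClosed_compl.closure_eq]
      simpa using hx
    obtain ⟨n, hn⟩ := ENNReal.exists_inv_nat_lt hpos.ne'
    refine ⟨n, ?_⟩
    simp only [hUdef, mem_compl_iff, Metric.mem_cthickening_iff, not_le]
    have e1 : ENNReal.ofReal (1/((n:ℝ)+1)) = ((n:ℝ≥0∞)+1)⁻¹ := by
      rw [one_div, ENNReal.ofReal_inv_of_pos (by positivity)]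
      congr 1
      rw [ENNReal.ofReal_add (by positivity) zero_le_one]
      simp
    calc ENNReal.ofReal (1/((n:ℝ)+1)) = ((n:ℝ≥0∞)+1)⁻¹ := e1
      _ ≤ ((n:ℝ≥0∞))⁻¹ := ENNReal.inv_le_inv' le_self_add
      _ < _ := hn
  -- approximating functions
  choose g hgR hgmono hgtend using fun m => hR.approx (U m) (hUopen m)
  have hgle : ∀ m k x, g m k x ≤ (U m).indicator (fun _ => (1:ℝ)) x :=
    fun m k x => (hgmono m x).ge_of_tendsto (hgtend m x) k
  have hgle0 : ∀ m k x, x ∉ U m → g m k x ≤ 0 := by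
    intro m k x hx
    have h := hgle m k x
    rwa [Set.indicator_of_notMem hx] at h
  -- trimmed cutoffs
  have trim : ∀ h : X →ᵇ ℝ, h ∈ R → ∃ f : X →ᵇ ℝ, f ∈ R ∧
      ∀ x, f x = min 1 (4 * max (h x - 2⁻¹) 0) := by
    intro h hh
    have h1R : h - const X (2⁻¹:ℝ) ∈ R := sub_mem hh (hR.const_mem _)
    obtain ⟨h2, h2R, h2eq⟩ := hR.sup_mem (h - const X (2⁻¹:ℝ)) (const X 0) h1R (hR.const_mem 0)
    obtain ⟨h4, h4R, h4eq⟩ := hR.inf_mem (const X 1) (const X 4 * h2) (hR.const_mem 1)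
      (hR.const_mul_mem 4 h2 h2R)
    refine ⟨h4, h4R, fun x => ?_⟩
    rw [h4eq x]
    simp [h2eq x]
  choose f hfR hfeq using fun m k => trim (g m k) (hgR m k)
  have hf01 : ∀ m k x, 0 ≤ f m k x ∧ f m k x ≤ 1 := by
    intro m k x
    rw [hfeq m k x]
    exact ⟨le_min zero_le_one (by positivity), min_le_left _ _⟩
  have hfnorm : ∀ m k, ‖f m k‖ ≤ 1 := by
    intro m k
    refine (BoundedContinuousFunction.norm_le zero_le_one).2 fun x => ?_
    rw [Real.norm_eq_abs, abs_le]
    exact ⟨by linarith [(hf01 m k x).1], (hf01 m k x).2⟩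
  have hfsupp : ∀ m k, tsupport ⇑(f m k) ⊆ A := by
    intro m k
    have hsupp' : Function.support ⇑(f m k) ⊆ U m := by
      intro x hx
      by_contra hxU
      apply hx
      rw [hfeq m k x]
      have h0 := hgle0 m k x hxU
      have hmax : max (g m k x - 2⁻¹) 0 = 0 := max_eq_right (by linarith)
      rw [hmax]
      simp
    exact (closure_mono hsupp').trans (hUcl m)
  have hfone : ∀ m k x, 3/4 < g m k x → f m k x = 1 := by
    intro m k x hx
    rw [hfeq m k x]
    rw [max_eq_left (by linarith)]
    exact min_eq_left (by linarith)
  -- countable cover by open sets with cutoffs identically 1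
  set O : ℕ → Set X := fun i => {x | 3/4 < g (Nat.unpair i).1 (Nat.unpair i).2 x} with hOdef
  set F : ℕ → X →ᵇ ℝ := fun i => f (Nat.unpair i).1 (Nat.unpair i).2 with hFdef
  have hOopen : ∀ i, IsOpen (O i) :=
    fun i => isOpen_lt continuous_const (g _ _).continuous
  have hOsubU : ∀ i, O i ⊆ U (Nat.unpair i).1 := by
    intro i x hx
    by_contra hxU
    have h0 := hgle0 (Nat.unpair i).1 (Nat.unpair i).2 x hxU
    have hx' : (3/4:ℝ) < g (Nat.unpair i).1 (Nat.unpair i).2 x := hx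
    linarith
  have hOsubA : ∀ i, O i ⊆ A := fun i => (hOsubU i).trans (hUsubA _)
  have hOcover : ⋃ i, O i = A := by
    apply subset_antisymm (iUnion_subset hOsubA)
    intro x hx
    obtain ⟨m, hm⟩ := hUcover x hx
    have h1 : Tendsto (fun k => g m k x) atTop (𝓝 1) := by
      have h := hgtend m x
      rwa [Set.indicator_of_mem hm] at h
    obtain ⟨k, hk⟩ := (h1.eventually (eventually_gt_nhds (by norm_num : (3/4:ℝ) < 1))).exists
    refine mem_iUnion.2 ⟨Nat.pair m k, ?_⟩
    simp only [hOdef, mem_setOf_eq, Nat.unpair_pair]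
    exact hk
  -- disjointed Borel partition
  set P : ℕ → Set X := disjointed O with hPdef
  have hPmeas : ∀ i, MeasurableSet (P i) :=
    MeasurableSet.disjointed fun i => (hOopen i).measurableSet
  have hPdisj : Pairwise (Function.onFun Disjoint P) := disjoint_disjointed O
  have hPsub : ∀ i, P i ⊆ O i := disjointed_subset O
  have hPunion : ⋃ i, P i = A := by rw [hPdef, iUnion_disjointed]; exact hOcover
  have hPA : ∀ i, P i ⊆ A := fun i => (hPsub i).trans (hOsubA i)
  -- cutoff properties
  have hFR : ∀ i, F i ∈ R := fun i => hfR _ _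
  have hFnorm : ∀ i, ‖F i‖ ≤ 1 := fun i => hfnorm _ _
  have hFsupp : ∀ i, tsupport ⇑(F i) ⊆ A := fun i => hfsupp _ _
  have hFone : ∀ i, ∀ x ∈ O i, F i x = 1 := fun i x hx => hfone _ _ x hx
  -- key locality step
  have hkey : ∀ i, N (P i) v = N (P i) ((⟨F i, hFR i⟩ : ↥R) • v) := by
    intro i
    have hloc : locNorm R (O i) (v - (⟨F i, hFR i⟩ : ↥R) • v) = 0 := by
      refine le_antisymm ?_ (locNorm_nonneg' hnorm _ _)
      refine Real.sSup_le ?_ le_rfl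
      rintro r ⟨gg, hgsupp, hg1, rfl⟩
      have heq : gg • (v - (⟨F i, hFR i⟩ : ↥R) • v) = (gg - gg * ⟨F i, hFR i⟩) • v := by
        rw [smul_sub, sub_smul, mul_smul]
      have hzero : gg - gg * (⟨F i, hFR i⟩ : ↥R) = 0 := by
        apply Subtype.ext
        show ((gg : X →ᵇ ℝ) - (gg : X →ᵇ ℝ) * F i) = (0 : X →ᵇ ℝ)
        ext x
        simp only [BoundedContinuousFunction.sub_apply, BoundedContinuousFunction.mul_apply,
          BoundedContinuousFunction.coe_zero, Pi.zero_apply]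
        by_cases hx : x ∈ O i
        · have h1 : F i x = 1 := hFone i x hx
          rw [h1, mul_one, sub_self]
        · have hg0 : (gg : X →ᵇ ℝ) x = 0 :=
            image_eq_zero_of_notMem_tsupport (fun hmem => hx (hgsupp hmem))
          rw [hg0, zero_mul, sub_self]
      rw [heq, hzero, zero_smul, norm_zero]
    have h0 : N (P i) (v - (⟨F i, hFR i⟩ : ↥R) • v) = 0 :=
      borel_local hnorm hN (hOopen i) _ hloc (hPmeas i) (hPsub i)
    rw [map_sub] at h0
    linarith
  have hFvL : ∀ i, ‖(⟨F i, hFR i⟩ : ↥R) • v‖ ≤ L :=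
    fun i => norm_smul_le_locNorm' hnorm _ (hFsupp i) (hFnorm i) v
  have habs : ∀ i, |N (P i) v| ≤ ‖N (P i)‖ * L := by
    intro i
    rw [hkey i]
    calc |N (P i) ((⟨F i, hFR i⟩ : ↥R) • v)| = ‖N (P i) ((⟨F i, hFR i⟩ : ↥R) • v)‖ :=
          (Real.norm_eq_abs _).symm
      _ ≤ ‖N (P i)‖ * ‖(⟨F i, hFR i⟩ : ↥R) • v‖ := (N (P i)).le_opNorm _
      _ ≤ ‖N (P i)‖ * L := mul_le_mul_of_nonneg_left (hFvL i) (norm_nonneg _)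
  -- total variation bound for partial partitions
  have hTV : ∀ n : ℕ, ∑ k ∈ Finset.range n, (‖N (P k)‖₊ : ℝ≥0∞) ≤ totalVar N A := by
    intro n
    set Q : Fin (n+1) → Set X :=
      fun i => if (i:ℕ) < n then P i else A \ ⋃ k, ⋃ (_ : k < n), P k with hQdef
    have hUP : (⋃ k, ⋃ (_ : k < n), P k) ⊆ A := by
      refine iUnion_subset fun k => iUnion_subset fun _ => hPA k
    have hQmeas : ∀ i, MeasurableSet (Q i) := by
      intro i
      simp only [hQdef]
      split
      · exact hPmeas _
      · exact hA.measurableSet.diff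
          (MeasurableSet.iUnion fun k => MeasurableSet.iUnion fun _ => hPmeas k)
    have hsubU2 : ∀ k, k < n → P k ⊆ ⋃ k, ⋃ (_ : k < n), P k :=
      fun k hk => Set.subset_iUnion₂ (s := fun k (_ : k < n) => P k) k hk
    have hQdisj : Pairwise (Function.onFun Disjoint Q) := by
      intro i j hij
      simp only [Function.onFun, hQdef]
      split
      · rename_i hi
        split
        · rename_i hj
          exact hPdisj (fun h => hij (Fin.ext (by omega)))
        · rename_i hjf
          exact Set.disjoint_sdiff_right.mono_left (hsubU2 (i:ℕ) hi)
      · rename_i hi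
        split
        · rename_i hj
          exact (Set.disjoint_sdiff_right.mono_left (hsubU2 (j:ℕ) hj)).symm
        · rename_i hj
          exact absurd (Fin.ext (by omega : (i:ℕ) = (j:ℕ))) hij
    have hQunion : ⋃ i, Q i = A := by
      apply subset_antisymm
      · refine iUnion_subset fun i => ?_
        simp only [hQdef]
        split
        · exact hPA _
        · exact diff_subset
      · intro x hx
        by_cases hxU : x ∈ ⋃ k, ⋃ (_ : k < n), P k
        · simp only [mem_iUnion] at hxU
          obtain ⟨k, hk, hxk⟩ := hxU
          refine mem_iUnion.2 ⟨⟨k, by omega⟩, ?_⟩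
          simp only [hQdef]
          rw [if_pos (by simpa using hk)]
          exact hxk
        · refine mem_iUnion.2 ⟨Fin.last n, ?_⟩
          simp only [hQdef]
          rw [if_neg (by simp)]
          exact ⟨hx, hxU⟩
    have hle : ∑ k ∈ Finset.range n, (‖N (P k)‖₊ : ℝ≥0∞) ≤ ∑ i, (‖N (Q i)‖₊ : ℝ≥0∞) := by
      rw [Fin.sum_univ_castSucc]
      have hcast : ∀ i : Fin n, Q i.castSucc = P i := by
        intro i
        simp only [hQdef, Fin.coe_castSucc]
        rw [if_pos i.isLt]
      calc ∑ k ∈ Finset.range n, (‖N (P k)‖₊ : ℝ≥0∞)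
          = ∑ i : Fin n, (‖N (P (i:ℕ))‖₊ : ℝ≥0∞) := (Fin.sum_univ_eq_sum_range _ n).symm
        _ = ∑ i : Fin n, (‖N (Q i.castSucc)‖₊ : ℝ≥0∞) := by
            refine Finset.sum_congr rfl fun i _ => by rw [hcast i]
        _ ≤ _ := le_self_add
    refine hle.trans ?_
    exact le_iSup_of_le (n+1) (le_iSup_of_le Q (le_iSup_of_le ⟨hQmeas, hQdisj, hQunion⟩ le_rfl))
  -- sigma additivity and passage to the limit
  have htend := hN.sigma_additive P hPmeas hPdisj
  rw [hPunion] at htend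
  have happ : Tendsto (fun n => ∑ k ∈ Finset.range n, N (P k) v) atTop (𝓝 (N A v)) := by
    have h1 : Tendsto (fun n => (∑ k ∈ Finset.range n, N (P k)) v) atTop (𝓝 (N A v)) :=
      ((ContinuousLinearMap.apply ℝ ℝ v).continuous.tendsto _).comp htend
    refine h1.congr fun n => ?_
    rw [ContinuousLinearMap.sum_apply]
  have hbd : ∀ n, ENNReal.ofReal |∑ k ∈ Finset.range n, N (P k) v| ≤
      totalVar N A * ENNReal.ofReal L := by
    intro n
    have h1 : |∑ k ∈ Finset.range n, N (P k) v| ≤ ∑ k ∈ Finset.range n, ‖N (P k)‖ * L :=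
      (Finset.abs_sum_le_sum_abs _ _).trans (Finset.sum_le_sum fun k _ => habs k)
    calc ENNReal.ofReal |∑ k ∈ Finset.range n, N (P k) v|
        ≤ ENNReal.ofReal (∑ k ∈ Finset.range n, ‖N (P k)‖ * L) := ENNReal.ofReal_le_ofReal h1
      _ = ∑ k ∈ Finset.range n, ENNReal.ofReal (‖N (P k)‖ * L) :=
          ENNReal.ofReal_sum_of_nonneg fun k _ => mul_nonneg (norm_nonneg _) hL0
      _ = ∑ k ∈ Finset.range n, (‖N (P k)‖₊ : ℝ≥0∞) * ENNReal.ofReal L := by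
          refine Finset.sum_congr rfl fun k _ => ?_
          rw [ENNReal.ofReal_mul (norm_nonneg _), ofReal_norm, enorm_eq_nnnorm]
      _ = (∑ k ∈ Finset.range n, (‖N (P k)‖₊ : ℝ≥0∞)) * ENNReal.ofReal L := by
          rw [Finset.sum_mul]
      _ ≤ totalVar N A * ENNReal.ofReal L := mul_le_mul_left (hTV n) _
  have hlim : Tendsto (fun n => ENNReal.ofReal |∑ k ∈ Finset.range n, N (P k) v|) atTop
      (𝓝 (ENNReal.ofReal |N A v|)) :=
    (ENNReal.continuous_ofReal.tendsto _).comp ((continuous_abs.tendsto _).comp happ)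
  exact le_of_tendsto hlim (Eventually.of_forall hbd)
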